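/- arXiv:1604.07147 — 2 statements merged into one kernel-verified Lean document; each statement's English description precedes it below -/
import Mathlib

section
/- For any a ∈ T₂(ℂ), the square D_a² of the inner derivation D_a(x) = ax − xa on T₂(ℂ) is itself an inner derivation of T₂(ℂ); explicitly, D_a² = D_b where b is the upper triangular matrix with entries b₁₁ = a₁₁² + a₂₂², b₁₂ = (a₁₁ − a₂₂)a₁₂, b₂₂ = 2a₁₁a₂₂. -/
open Matrix

def T2 : Subalgebra ℂ (Matrix (Fin 2) (Fin 2) ℂ) where
  carrier := {x | x 1 0 = 0}
  mul_mem' := by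
    intro a b ha hb
    simp only [Set.mem_setOf_eq] at *
    simp [Matrix.mul_apply, Fin.sum_univ_two, ha, hb]
  add_mem' := by
    intro a b ha hb
    simp only [Set.mem_setOf_eq] at *
    simp [ha, hb]
  algebraMap_mem' := by
    intro r
    simp [Matrix.algebraMap_matrix_apply]

/-- The square of the inner derivation D_a on T₂(ℂ) is the inner derivation
D_b where b₁₁ = a₁₁² + a₂₂², b₁₂ = (a₁₁ − a₂₂)a₁₂, b₂₂ = 2a₁₁a₂₂. -/
theorem inner_derivation_T2_sq_inner (a : T2) :
    ∃ b : T2,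
      (b : Matrix (Fin 2) (Fin 2) ℂ) 0 0 =
        (a : Matrix (Fin 2) (Fin 2) ℂ) 0 0 ^ 2 +
          (a : Matrix (Fin 2) (Fin 2) ℂ) 1 1 ^ 2 ∧
      (b : Matrix (Fin 2) (Fin 2) ℂ) 0 1 =
        ((a : Matrix (Fin 2) (Fin 2) ℂ) 0 0 -
          (a : Matrix (Fin 2) (Fin 2) ℂ) 1 1) *
          (a : Matrix (Fin 2) (Fin 2) ℂ) 0 1 ∧
      (b : Matrix (Fin 2) (Fin 2) ℂ) 1 1 =
        2 * (a : Matrix (Fin 2) (Fin 2) ℂ) 0 0 *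
          (a : Matrix (Fin 2) (Fin 2) ℂ) 1 1 ∧
      ∀ x : T2, a * (a * x - x * a) - (a * x - x * a) * a = b * x - x * b := by

  obtain ⟨A, hA⟩ := a
  have hA10 : A 1 0 = 0 := hA
  refine ⟨⟨!![A 0 0 ^ 2 + A 1 1 ^ 2, (A 0 0 - A 1 1) * A 0 1; 0, 2 * A 0 0 * A 1 1], by
    show _ = (0 : ℂ); simp⟩, by simp, by simp, by simp, ?_⟩
  rintro ⟨X, hX⟩
  have hX10 : X 1 0 = 0 := hX
  apply Subtype.ext
  show A * (A * X - X * A) - (A * X - X * A) * A = _ * X - X * _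
  ext i j
  fin_cases i <;> fin_cases j <;>
    simp [Matrix.mul_apply, Matrix.vecMul, dotProduct, Fin.sum_univ_two, hA10, hX10] <;> ring
end

section
/- The square of every derivation on T₂(ℂ) is again a derivation on T₂(ℂ), although T₂(ℂ) is noncommutative. -/
set_option linter.unreachableTactic false
set_option linter.unusedTactic false

open Matrix

def E1 : T2 := ⟨!![1,0;0,0], by show (!![1,0;0,0] : Matrix (Fin 2) (Fin 2) ℂ) 1 0 = 0; simp⟩
def E2 : T2 := ⟨!![0,1;0,0], by show (!![0,1;0,0] : Matrix (Fin 2) (Fin 2) ℂ) 1 0 = 0; simp⟩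
def E3 : T2 := ⟨!![0,0;0,1], by show (!![0,0;0,1] : Matrix (Fin 2) (Fin 2) ℂ) 1 0 = 0; simp⟩

lemma decomp (x : T2) :
    x = (x : Matrix (Fin 2) (Fin 2) ℂ) 0 0 • E1 + (x : Matrix (Fin 2) (Fin 2) ℂ) 0 1 • E2
      + (x : Matrix (Fin 2) (Fin 2) ℂ) 1 1 • E3 := by
  apply Subtype.ext
  ext i j
  have hx2 : (x : Matrix (Fin 2) (Fin 2) ℂ) 1 0 = 0 := x.2
  fin_cases i <;> fin_cases j <;>
    simp [E1, E2, E3, hx2]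

lemma mulzero (a b : T2)
    (ha0 : (a : Matrix (Fin 2) (Fin 2) ℂ) 0 0 = 0) (ha1 : (a : Matrix (Fin 2) (Fin 2) ℂ) 1 1 = 0)
    (hb0 : (b : Matrix (Fin 2) (Fin 2) ℂ) 0 0 = 0) (hb1 : (b : Matrix (Fin 2) (Fin 2) ℂ) 1 1 = 0) :
    a * b = 0 := by
  apply Subtype.ext
  show (a : Matrix (Fin 2) (Fin 2) ℂ) * b = 0
  have ha2 : (a : Matrix (Fin 2) (Fin 2) ℂ) 1 0 = 0 := a.2
  have hb2 : (b : Matrix (Fin 2) (Fin 2) ℂ) 1 0 = 0 := b.2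
  ext i j
  fin_cases i <;> fin_cases j <;>
    simp [Matrix.mul_apply, Fin.sum_univ_two, ha0, ha1, hb0, hb1, ha2, hb2]

lemma strict (D : T2 →ₗ[ℂ] T2)
    (hD : ∀ x y : T2, D (x * y) = D x * y + x * D y) (x : T2) :
    (D x : Matrix (Fin 2) (Fin 2) ℂ) 0 0 = 0 ∧ (D x : Matrix (Fin 2) (Fin 2) ℂ) 1 1 = 0 := by
  have hE1 : E1 * E1 = E1 := by
    apply Subtype.ext
    show (E1 : Matrix (Fin 2) (Fin 2) ℂ) * E1 = E1
    ext i j; fin_cases i <;> fin_cases j <;> simp [E1, Matrix.mul_apply, Fin.sum_univ_two]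
  have hE3 : E3 * E3 = E3 := by
    apply Subtype.ext
    show (E3 : Matrix (Fin 2) (Fin 2) ℂ) * E3 = E3
    ext i j; fin_cases i <;> fin_cases j <;> simp [E3, Matrix.mul_apply, Fin.sum_univ_two]
  have hE12 : E1 * E2 = E2 := by
    apply Subtype.ext
    show (E1 : Matrix (Fin 2) (Fin 2) ℂ) * E2 = E2
    ext i j; fin_cases i <;> fin_cases j <;> simp [E1, E2, Matrix.mul_apply, Fin.sum_univ_two]
  have hE23 : E2 * E3 = E2 := by
    apply Subtype.ext
    show (E2 : Matrix (Fin 2) (Fin 2) ℂ) * E3 = E2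
    ext i j; fin_cases i <;> fin_cases j <;> simp [E2, E3, Matrix.mul_apply, Fin.sum_univ_two]
  have h1 := hD E1 E1; rw [hE1] at h1
  have h3 := hD E3 E3; rw [hE3] at h3
  have h12 := hD E1 E2; rw [hE12] at h12
  have h23 := hD E2 E3; rw [hE23] at h23
  have cE1 : (E1 : Matrix (Fin 2) (Fin 2) ℂ) = !![1,0;0,0] := rfl
  have cE2 : (E2 : Matrix (Fin 2) (Fin 2) ℂ) = !![0,1;0,0] := rfl
  have cE3 : (E3 : Matrix (Fin 2) (Fin 2) ℂ) = !![0,0;0,1] := rfl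
  have hd1 : (D E1 : Matrix (Fin 2) (Fin 2) ℂ) 1 0 = 0 := (D E1).2
  have hd2 : (D E2 : Matrix (Fin 2) (Fin 2) ℂ) 1 0 = 0 := (D E2).2
  have hd3 : (D E3 : Matrix (Fin 2) (Fin 2) ℂ) 1 0 = 0 := (D E3).2
  have c1 := congrArg (fun a : T2 => (a : Matrix (Fin 2) (Fin 2) ℂ) 0 0) h1
  have c1' := congrArg (fun a : T2 => (a : Matrix (Fin 2) (Fin 2) ℂ) 1 1) h1
  have c3 := congrArg (fun a : T2 => (a : Matrix (Fin 2) (Fin 2) ℂ) 0 0) h3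
  have c3' := congrArg (fun a : T2 => (a : Matrix (Fin 2) (Fin 2) ℂ) 1 1) h3
  have c12 := congrArg (fun a : T2 => (a : Matrix (Fin 2) (Fin 2) ℂ) 1 1) h12
  have c23 := congrArg (fun a : T2 => (a : Matrix (Fin 2) (Fin 2) ℂ) 0 0) h23
  simp only [MulMemClass.coe_mul, AddMemClass.coe_add, Matrix.add_apply, Matrix.mul_apply,
    Fin.sum_univ_two, cE1, cE2, cE3, Matrix.cons_val', Matrix.cons_val_zero, Matrix.cons_val_one,
    Matrix.head_cons, Matrix.head_fin_const, Matrix.empty_val', Matrix.cons_val_fin_one,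
    mul_one, mul_zero, zero_mul, one_mul, add_zero, zero_add, hd1, hd2, hd3]
    at c1 c1' c3 c3' c12 c23
  simp only [show (!![1,0;0,0] : Matrix (Fin 2) (Fin 2) ℂ) 0 0 = 1 from rfl,
    show (!![1,0;0,0] : Matrix (Fin 2) (Fin 2) ℂ) 0 1 = 0 from rfl,
    show (!![1,0;0,0] : Matrix (Fin 2) (Fin 2) ℂ) 1 0 = 0 from rfl,
    show (!![1,0;0,0] : Matrix (Fin 2) (Fin 2) ℂ) 1 1 = 0 from rfl,
    show (!![0,1;0,0] : Matrix (Fin 2) (Fin 2) ℂ) 0 0 = 0 from rfl,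
    show (!![0,1;0,0] : Matrix (Fin 2) (Fin 2) ℂ) 1 1 = 0 from rfl,
    show (!![0,0;0,1] : Matrix (Fin 2) (Fin 2) ℂ) 0 0 = 0 from rfl,
    show (!![0,0;0,1] : Matrix (Fin 2) (Fin 2) ℂ) 1 0 = 0 from rfl,
    show (!![0,0;0,1] : Matrix (Fin 2) (Fin 2) ℂ) 1 1 = 1 from rfl,
    mul_one, mul_zero, zero_mul, one_mul, add_zero, zero_add]
    at c1 c1' c3 c3' c12 c23
  have d1 : (D E1 : Matrix (Fin 2) (Fin 2) ℂ) 0 0 = 0 := by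
    first | exact c1 | linear_combination c1 | linear_combination -c1
  have d1' : (D E1 : Matrix (Fin 2) (Fin 2) ℂ) 1 1 = 0 := by
    first | exact c1' | linear_combination c1' | linear_combination -c1'
  have d3 : (D E3 : Matrix (Fin 2) (Fin 2) ℂ) 0 0 = 0 := by
    first | exact c3 | linear_combination c3 | linear_combination -c3
  have d3' : (D E3 : Matrix (Fin 2) (Fin 2) ℂ) 1 1 = 0 := by
    first | exact c3' | linear_combination c3' | linear_combination -c3'
  have d2' : (D E2 : Matrix (Fin 2) (Fin 2) ℂ) 1 1 = 0 := by
    first | exact c12 | linear_combination c12 | linear_combination -c12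
  have d2 : (D E2 : Matrix (Fin 2) (Fin 2) ℂ) 0 0 = 0 := by
    first | exact c23 | linear_combination c23 | linear_combination -c23
  have hx := congrArg D (decomp x)
  rw [map_add, map_add, D.map_smul, D.map_smul, D.map_smul] at hx
  rw [hx]
  constructor <;>
    simp only [AddMemClass.coe_add, SetLike.val_smul, Matrix.add_apply, Matrix.smul_apply,
      d1, d2, d3, d1', d2', d3', smul_zero, add_zero]

/-- The square of every derivation on T₂(ℂ) is again a derivation, although
T₂(ℂ) is noncommutative. -/
theorem derivation_T2_sq_derivation :
    (∀ D : T2 →ₗ[ℂ] T2,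
      (∀ x y : T2, D (x * y) = D x * y + x * D y) →
      ∀ x y : T2, D (D (x * y)) = D (D x) * y + x * D (D y)) ∧
    ¬ (∀ x y : T2, x * y = y * x) := by
  constructor
  · intro D hD x y
    have key : D x * D y = 0 :=
      mulzero _ _ (strict D hD x).1 (strict D hD x).2 (strict D hD y).1 (strict D hD y).2
    rw [hD x y, map_add, hD (D x) y, hD x (D y), key]
    abel
  · intro h
    have := congrArg (fun a : T2 => (a : Matrix (Fin 2) (Fin 2) ℂ) 0 1) (h E1 E2)
    simp [E1, E2, Matrix.mul_apply, Fin.sum_univ_two] at this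
end
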